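/- A Fuchs–van-de-Graaf type inequality for the hockey-stick divergence: for any density operators ρ, σ on a finite-dimensional complex Hilbert space and any γ ≥ 1, E_γ(ρ‖σ) ≤ (1/2)·√((1+γ)² − 4γ·F(ρ,σ)) + (1−γ)/2, where F(ρ,σ) = ‖√ρ·√σ‖₁² is the quantum fidelity. -/

import Mathlib

open scoped BigOperators ComplexOrder

/-- Trace of the positive part of a Hermitian matrix (0 if not Hermitian). -/
noncomputable def posPartTrace {n : Type*} [Fintype n] [DecidableEq n]
    (X : Matrix n n ℂ) : ℝ :=
  if h : X.IsHermitian then ∑ i, max (h.eigenvalues i) 0 else 0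

/-- The quantum hockey-stick divergence `E_γ(ρ‖σ) = Tr[(ρ - γσ)₊]`. -/
noncomputable def hsDiv {n : Type*} [Fintype n] [DecidableEq n]
    (γ : ℝ) (ρ σ : Matrix n n ℂ) : ℝ :=
  posPartTrace (ρ - (γ : ℂ) • σ)

/-- A density operator: positive semidefinite with unit trace. -/
def IsDensity {n : Type*} [Fintype n] [DecidableEq n] (ρ : Matrix n n ℂ) : Prop :=
  ρ.PosSemidef ∧ ρ.trace = 1

/-- Trace norm: the sum of the singular values. -/
noncomputable def traceNorm {n : Type*} [Fintype n] [DecidableEq n]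
    (X : Matrix n n ℂ) : ℝ :=
  ∑ i, Real.sqrt ((Matrix.posSemidef_conjTranspose_mul_self X).isHermitian.eigenvalues i)

/-- Completely positive trace-preserving linear map. -/
def IsCPTP {n m : Type*} [Fintype n] [DecidableEq n] [Fintype m] [DecidableEq m]
    (Φ : Matrix n n ℂ →ₗ[ℂ] Matrix m m ℂ) : Prop :=
  (∀ k : ℕ, ∀ X : Matrix (Fin k × n) (Fin k × n) ℂ, X.PosSemidef →
      (Matrix.of fun p q : Fin k × m =>
        Φ (Matrix.of fun i j => X (p.1, i) (q.1, j)) p.2 q.2).PosSemidef) ∧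
  (∀ X, (Φ X).trace = X.trace)

/-- Contraction coefficient of a channel for the hockey-stick divergence. -/
noncomputable def contractionCoeff {n : Type*} [Fintype n] [DecidableEq n]
    (γ : ℝ) (Φ : Matrix n n ℂ →ₗ[ℂ] Matrix n n ℂ) : ℝ :=
  sSup {x : ℝ | ∃ ρ σ : Matrix n n ℂ, IsDensity ρ ∧ IsDensity σ ∧
    0 < hsDiv γ ρ σ ∧ x = hsDiv γ (Φ ρ) (Φ σ) / hsDiv γ ρ σ}

/-- The positive semidefinite square root (definition of `Matrix.PosSemidef.sqrt` from the
older Mathlib, which has since been removed). -/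
noncomputable def Matrix.PosSemidef.sqrt {n : Type*} [Fintype n] [DecidableEq n]
    {A : Matrix n n ℂ} (hA : A.PosSemidef) : Matrix n n ℂ :=
  hA.1.eigenvectorUnitary.1 * Matrix.diagonal ((↑) ∘ (√·) ∘ hA.1.eigenvalues) *
  (star hA.1.eigenvectorUnitary : Matrix n n ℂ)

lemma Matrix.PosSemidef.sqrt_conjTranspose {n : Type*} [Fintype n] [DecidableEq n]
    {A : Matrix n n ℂ} (hA : A.PosSemidef) : Matrix.conjTranspose hA.sqrt = hA.sqrt := by
  unfold Matrix.PosSemidef.sqrt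
  rw [Matrix.conjTranspose_mul, Matrix.conjTranspose_mul, Matrix.diagonal_conjTranspose]
  have hst : star ((↑) ∘ (√·) ∘ hA.1.eigenvalues : n → ℂ) = ((↑) ∘ (√·) ∘ hA.1.eigenvalues) := by
    funext i
    simp [Pi.star_apply, Complex.star_def, Complex.conj_ofReal]
  rw [hst]
  simp [Matrix.mul_assoc, Matrix.star_eq_conjTranspose]

lemma Matrix.PosSemidef.sqrt_mul_self {n : Type*} [Fintype n] [DecidableEq n]
    {A : Matrix n n ℂ} (hA : A.PosSemidef) : hA.sqrt * hA.sqrt = A := by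
  unfold Matrix.PosSemidef.sqrt
  conv_rhs => rw [hA.1.spectral_theorem, Unitary.conjStarAlgAut_apply]
  have hu : (star hA.1.eigenvectorUnitary : Matrix n n ℂ) *
      (hA.1.eigenvectorUnitary : Matrix n n ℂ) = 1 := Unitary.coe_star_mul_self _
  set U : Matrix n n ℂ := (hA.1.eigenvectorUnitary : Matrix n n ℂ)
  set V : Matrix n n ℂ := (star hA.1.eigenvectorUnitary : Matrix n n ℂ)
  set D := Matrix.diagonal ((↑) ∘ (√·) ∘ hA.1.eigenvalues : n → ℂ)
  rw [show U * D * V * (U * D * V) = U * (D * (V * U) * D) * V by noncomm_ring, hu,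
    Matrix.mul_one, Matrix.diagonal_mul_diagonal]
  congr 3
  funext i
  simp only [Function.comp_apply]
  rw [← Complex.ofReal_mul, Real.mul_self_sqrt (hA.eigenvalues_nonneg i)]
  rfl

set_option linter.unusedSectionVars false
set_option maxHeartbeats 2000000

noncomputable def frobSq {n : Type*} [Fintype n] (C : Matrix n n ℂ) : ℝ :=
  ∑ j, ∑ i, ‖C i j‖ ^ 2

namespace FvdGAux
open Matrix
variable {n : Type*} [Fintype n] [DecidableEq n]

lemma frobSq_nonneg (C : Matrix n n ℂ) : 0 ≤ frobSq C := by
  apply Finset.sum_nonneg; intro j _; apply Finset.sum_nonneg; intro i _; positivity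

lemma trace_conjTranspose_mul (C : Matrix n n ℂ) :
    (Cᴴ * C).trace = (frobSq C : ℂ) := by
  simp only [Matrix.trace, Matrix.diag, Matrix.mul_apply, Matrix.conjTranspose_apply, frobSq]
  push_cast
  congr 1; ext j; congr 1; ext i
  exact Complex.conj_mul' (C i j)

lemma re_trace_conjTranspose_mul (C : Matrix n n ℂ) :
    ((Cᴴ * C).trace).re = frobSq C := by
  rw [trace_conjTranspose_mul]; simp

lemma norm_trace_conjTranspose_mul_le (C D : Matrix n n ℂ) :
    ‖(Cᴴ * D).trace‖ ≤ Real.sqrt (frobSq C) * Real.sqrt (frobSq D) := by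
  let x : EuclideanSpace ℂ (n × n) := WithLp.toLp 2 (fun p : n × n => C p.2 p.1)
  let y : EuclideanSpace ℂ (n × n) := WithLp.toLp 2 (fun p : n × n => D p.2 p.1)
  have h1 : (Cᴴ * D).trace = inner (𝕜 := ℂ) x y := by
    rw [PiLp.inner_apply]
    simp only [Matrix.trace, Matrix.diag, Matrix.mul_apply, Matrix.conjTranspose_apply,
      RCLike.inner_apply, Fintype.sum_prod_type]
    exact Finset.sum_congr rfl fun _ _ => Finset.sum_congr rfl fun _ _ => mul_comm _ _
  have h2 : ‖x‖ = Real.sqrt (frobSq C) := by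
    rw [EuclideanSpace.norm_eq]
    congr 1
    rw [frobSq, Fintype.sum_prod_type]
  have h3 : ‖y‖ = Real.sqrt (frobSq D) := by
    rw [EuclideanSpace.norm_eq]
    congr 1
    rw [frobSq, Fintype.sum_prod_type]
  rw [h1, ← h2, ← h3]
  exact norm_inner_le_norm x y

lemma frobSq_unitary_mul {U : Matrix n n ℂ} (hU : Uᴴ * U = 1) (C : Matrix n n ℂ) :
    frobSq (U * C) = frobSq C := by
  have : ((U * C)ᴴ * (U * C)).trace = (Cᴴ * C).trace := by
    rw [conjTranspose_mul, Matrix.mul_assoc, ← Matrix.mul_assoc Uᴴ U C, hU, Matrix.one_mul]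
  have h2 := trace_conjTranspose_mul (U * C)
  rw [this, trace_conjTranspose_mul] at h2
  exact_mod_cast h2.symm

lemma frobSq_diagonal_mul (g : n → ℂ) (hg : ∀ i, ‖g i‖ ≤ 1) (C : Matrix n n ℂ) :
    frobSq (diagonal g * C) ≤ frobSq C := by
  unfold frobSq
  apply Finset.sum_le_sum; intro j _
  apply Finset.sum_le_sum; intro i _
  rw [Matrix.diagonal_mul, norm_mul, mul_pow]
  have : ‖g i‖ ^ 2 ≤ 1 := by
    have := hg i; nlinarith [norm_nonneg (g i)]
  nlinarith [sq_nonneg ‖C i j‖, norm_nonneg (C i j)]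

lemma trace_eq_sum_eigenvalues {A : Matrix n n ℂ} (hA : A.IsHermitian) :
    A.trace = ∑ i, (hA.eigenvalues i : ℂ) := by
  conv_lhs => rw [hA.spectral_theorem]
  rw [Unitary.conjStarAlgAut_apply, Matrix.trace_mul_comm, ← Matrix.mul_assoc]
  have : (star (hA.eigenvectorUnitary : Matrix n n ℂ)) * (hA.eigenvectorUnitary : Matrix n n ℂ)
      = 1 := by
    simpa using Unitary.coe_star_mul_self hA.eigenvectorUnitary
  rw [this, Matrix.one_mul, Matrix.trace_diagonal]
  rfl

lemma exists_polar_unitary {d : ℕ} (X : Matrix (Fin d) (Fin d) ℂ) :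
    ∃ W : Matrix (Fin d) (Fin d) ℂ, W * Wᴴ = 1 ∧
      (X * W).trace = (traceNorm X : ℂ) := by
  classical
  have hP := Matrix.posSemidef_conjTranspose_mul_self X
  set hH := hP.isHermitian with hHdef
  set ev : Fin d → ℝ := hH.eigenvalues with hevdef
  have hev0 : ∀ i, 0 ≤ ev i := hP.eigenvalues_nonneg
  set v : Fin d → EuclideanSpace ℂ (Fin d) := fun i => hH.eigenvectorBasis i with hvdef
  set Xv : Fin d → EuclideanSpace ℂ (Fin d) := fun i => WithLp.toLp 2 (X *ᵥ ⇑(v i) : Fin d → ℂ) with hXvdef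
  have hvon : ∀ i j, (inner ℂ (v i) (v j) : ℂ) = if i = j then 1 else 0 :=
    orthonormal_iff_ite.mp hH.eigenvectorBasis.orthonormal
  have key : ∀ i j, (inner ℂ (Xv i) (Xv j) : ℂ) = if i = j then (ev j : ℂ) else 0 := by
    intro i j
    rw [PiLp.inner_apply]
    have h1 : ∑ k, (inner ℂ (Xv i k) (Xv j k) : ℂ) = star (X *ᵥ ⇑(v i)) ⬝ᵥ (X *ᵥ ⇑(v j)) := by
      simp [dotProduct, RCLike.inner_apply, Xv, mul_comm]
    rw [h1, Matrix.star_mulVec, ← dotProduct_mulVec, Matrix.mulVec_mulVec]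
    rw [show (Xᴴ * X) *ᵥ ⇑(v j) = ev j • ⇑(v j) from hH.mulVec_eigenvectorBasis j]
    rw [dotProduct_smul]
    have h2 : star ⇑(v i) ⬝ᵥ ⇑(v j) = (inner ℂ (v i) (v j) : ℂ) := by
      simp [dotProduct, RCLike.inner_apply, PiLp.inner_apply, mul_comm]
    rw [h2, hvon i j]
    by_cases h : i = j <;> simp [h, Complex.real_smul]
  set s : Set (Fin d) := {i | ev i ≠ 0} with hsdef
  set f : Fin d → EuclideanSpace ℂ (Fin d) :=
    fun i => (((Real.sqrt (ev i))⁻¹ : ℝ) : ℂ) • Xv i with hfdef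
  have hf : Orthonormal ℂ (s.restrict f) := by
    rw [orthonormal_iff_ite]
    rintro ⟨i, hi⟩ ⟨j, hj⟩
    simp only [Set.restrict_apply, hfdef]
    show inner ℂ ((((Real.sqrt (ev i))⁻¹ : ℝ) : ℂ) • Xv i) ((((Real.sqrt (ev j))⁻¹ : ℝ) : ℂ) • Xv j) = _
    rw [inner_smul_left, inner_smul_right, key i j]
    by_cases h : i = j
    · subst h
      simp only [if_pos rfl, Subtype.mk_eq_mk, map_inv₀, Complex.conj_ofReal]
      have hsq : Real.sqrt (ev i) * Real.sqrt (ev i) = ev i := Real.mul_self_sqrt (hev0 i)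
      have hne : Real.sqrt (ev i) ≠ 0 := by
        intro h0
        exact hi (by rw [← hsq, h0, mul_zero])
      field_simp
      rw [mul_comm]
      have hev : (ev i : ℂ) ≠ 0 := by exact_mod_cast hi
      rw [if_pos trivial, if_pos trivial, ← Complex.ofReal_pow, div_pow, one_pow, sq, hsq]
      push_cast
      field_simp
    · rw [if_neg h, if_neg (by simpa [Subtype.mk_eq_mk] using h)]
      ring
  obtain ⟨b, hb⟩ := hf.exists_orthonormalBasis_extension_of_card_eq
    (by simp [finrank_euclideanSpace])
  set Bu : Matrix (Fin d) (Fin d) ℂ := Matrix.of fun k i => (b i) k with hBudef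
  have hBu : Buᴴ * Bu = 1 := by
    have hbon : ∀ i j, (inner ℂ (b i) (b j) : ℂ) = if i = j then 1 else 0 :=
      orthonormal_iff_ite.mp b.orthonormal
    ext i j
    rw [Matrix.mul_apply, Matrix.one_apply]
    rw [← hbon i j, PiLp.inner_apply]
    simp [RCLike.inner_apply, Bu, mul_comm]
  have hBu' : Bu * Buᴴ = 1 := mul_eq_one_comm.mp hBu
  set P : Matrix (Fin d) (Fin d) ℂ := (hH.eigenvectorUnitary : Matrix (Fin d) (Fin d) ℂ)
    with hPdef
  have hPU : P * Pᴴ = 1 := by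
    rw [← Matrix.star_eq_conjTranspose]
    exact Matrix.mem_unitaryGroup_iff.mp hH.eigenvectorUnitary.2
  refine ⟨P * Buᴴ, ?_, ?_⟩
  · rw [Matrix.conjTranspose_mul, Matrix.conjTranspose_conjTranspose,
      Matrix.mul_assoc, ← Matrix.mul_assoc Buᴴ Bu Pᴴ, hBu, Matrix.one_mul, hPU]
  · rw [← Matrix.mul_assoc, Matrix.trace_mul_comm]
    have hXP : ∀ k i, (X * P) k i = Xv i k := fun k i => rfl
    have hterm : ∀ i, (Buᴴ * (X * P)) i i = (Real.sqrt (ev i) : ℂ) := by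
      intro i
      rw [Matrix.mul_apply]
      have : ∑ k, Buᴴ i k * (X * P) k i = (inner ℂ (b i) (Xv i) : ℂ) := by
        rw [PiLp.inner_apply]
        simp [RCLike.inner_apply, Bu, hXP, mul_comm]
      rw [this]
      by_cases hi : ev i ≠ 0
      · rw [hb i hi]
        simp only [hfdef]
        rw [inner_smul_left, key i i, if_pos rfl, Complex.conj_ofReal]
        have hsq : Real.sqrt (ev i) * Real.sqrt (ev i) = ev i := Real.mul_self_sqrt (hev0 i)
        have hne : Real.sqrt (ev i) ≠ 0 := fun h0 => hi (by rw [← hsq, h0, mul_zero])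
        have hre : (Real.sqrt (ev i))⁻¹ * ev i = Real.sqrt (ev i) := by
          field_simp
          rw [sq, hsq]
        exact_mod_cast congrArg Complex.ofReal hre
      · push_neg at hi
        have hXv0 : Xv i = 0 := by
          have := key i i
          rw [if_pos rfl, hi] at this
          exact inner_self_eq_zero.mp (by exact_mod_cast this)
        rw [hXv0, inner_zero_right, hi, Real.sqrt_zero, Complex.ofReal_zero]
    rw [Matrix.trace]
    unfold traceNorm
    push_cast
    exact Finset.sum_congr rfl fun i _ => hterm i

end FvdGAux

open FvdGAux Matrix

/-- Fuchs–van-de-Graaf type inequality for the hockey-stick divergence, where the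
fidelity is `F(ρ,σ) = ‖√ρ √σ‖₁²`. -/
theorem hsDiv_le_fvdg {d : ℕ} (ρ σ : Matrix (Fin d) (Fin d) ℂ)
    (hρ : IsDensity ρ) (hσ : IsDensity σ) (γ : ℝ) (hγ : 1 ≤ γ) :
    hsDiv γ ρ σ ≤
      (1 / 2) * Real.sqrt ((1 + γ) ^ 2 - 4 * γ * (traceNorm (hρ.1.sqrt * hσ.1.sqrt)) ^ 2)
        + (1 - γ) / 2 := by
  classical
  have hγ0 : (0:ℝ) ≤ γ := le_trans zero_le_one hγ
  set A : Matrix (Fin d) (Fin d) ℂ := hρ.1.sqrt with hAdef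
  set S : Matrix (Fin d) (Fin d) ℂ := hσ.1.sqrt with hSdef
  set t : ℝ := traceNorm (A * S) with htdef
  obtain ⟨W, hWU, hWt⟩ := exists_polar_unitary (A * S)
  set c : ℝ := Real.sqrt γ with hcdef
  have hc2 : c * c = γ := Real.mul_self_sqrt hγ0
  set B : Matrix (Fin d) (Fin d) ℂ := (c : ℂ) • (S * W) with hBdef
  set M : Matrix (Fin d) (Fin d) ℂ := ρ - (γ : ℂ) • σ with hMdef
  have hσH : ((γ : ℂ) • σ).IsHermitian := by
    unfold Matrix.IsHermitian
    rw [Matrix.conjTranspose_smul, hσ.1.1]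
    congr 1
    simp [Complex.star_def, Complex.conj_ofReal]
  have hM : M.IsHermitian := hρ.1.1.sub hσH
  set lam : Fin d → ℝ := hM.eigenvalues with hlamdef
  -- basic algebra
  have hAH : Aᴴ = A := hρ.1.sqrt_conjTranspose
  have hSH : Sᴴ = S := hσ.1.sqrt_conjTranspose
  have hAA : A * A = ρ := hρ.1.sqrt_mul_self
  have hSS : S * S = σ := hσ.1.sqrt_mul_self
  have hBBH : B * Bᴴ = (γ : ℂ) • σ := by
    rw [hBdef, Matrix.conjTranspose_smul, Matrix.conjTranspose_mul, hSH]
    rw [Matrix.smul_mul, Matrix.mul_smul, smul_smul]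
    rw [show (S * W) * (Wᴴ * S) = S * (W * Wᴴ) * S by noncomm_ring, hWU,
      Matrix.mul_one, hSS]
    congr 1
    rw [Complex.star_def, Complex.conj_ofReal]
    exact_mod_cast congrArg Complex.ofReal hc2
  have hMeq : M = A * Aᴴ - B * Bᴴ := by rw [hAH, hAA, hBBH]
  set Cm : Matrix (Fin d) (Fin d) ℂ := A - B with hCmdef
  set Dp : Matrix (Fin d) (Fin d) ℂ := A + B with hDpdef
  have hCD : Cm * Dpᴴ + Dp * Cmᴴ = M + M := by
    rw [hMeq, hCmdef, hDpdef]
    rw [Matrix.conjTranspose_add, Matrix.conjTranspose_sub]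
    noncomm_ring
  -- the sign unitary
  set U : Matrix (Fin d) (Fin d) ℂ := (hM.eigenvectorUnitary : Matrix (Fin d) (Fin d) ℂ)
    with hUdef
  have hUU' : U * Uᴴ = 1 := by
    rw [← Matrix.star_eq_conjTranspose]
    exact Matrix.mem_unitaryGroup_iff.mp hM.eigenvectorUnitary.2
  have hUU : Uᴴ * U = 1 := mul_eq_one_comm.mp hUU'
  set g : Fin d → ℝ := fun i => if 0 ≤ lam i then 1 else -1 with hgdef
  set W₀ : Matrix (Fin d) (Fin d) ℂ := U * Matrix.diagonal (fun i => (g i : ℂ)) * Uᴴ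
    with hW₀def
  have hDH : (Matrix.diagonal (fun i => (g i : ℂ)))ᴴ = Matrix.diagonal (fun i => (g i : ℂ)) := by
    have hst : (star fun i => ((g i : ℝ) : ℂ)) = fun i => ((g i : ℝ) : ℂ) := by
      funext i
      simp [Pi.star_apply, Complex.star_def, Complex.conj_ofReal]
    rw [Matrix.diagonal_conjTranspose, hst]
  have hW₀H : W₀ᴴ = W₀ := by
    rw [hW₀def, Matrix.conjTranspose_mul, Matrix.conjTranspose_mul,
      Matrix.conjTranspose_conjTranspose, hDH, Matrix.mul_assoc]
  set T : ℝ := ∑ i, |lam i| with hTdef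
  have hspec : M = U * Matrix.diagonal (fun i => ((lam i : ℝ) : ℂ)) * Uᴴ := by
    have h := hM.spectral_theorem
    rw [← Matrix.star_eq_conjTranspose]
    exact h
  have hK1 : (W₀ * M).trace = (T : ℂ) := by
    conv_lhs => rw [hspec]
    rw [hW₀def]
    rw [show U * Matrix.diagonal (fun i => (g i : ℂ)) * Uᴴ *
        (U * Matrix.diagonal (fun i => ((lam i : ℝ) : ℂ)) * Uᴴ)
      = U * (Matrix.diagonal (fun i => (g i : ℂ)) * (Uᴴ * U) *
          Matrix.diagonal (fun i => ((lam i : ℝ) : ℂ))) * Uᴴ by noncomm_ring]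
    rw [hUU, Matrix.mul_one, Matrix.diagonal_mul_diagonal]
    rw [Matrix.trace_mul_comm, ← Matrix.mul_assoc, hUU, Matrix.one_mul,
      Matrix.trace_diagonal]
    rw [hTdef]
    push_cast
    apply Finset.sum_congr rfl
    intro i _
    show (g i : ℂ) * ((lam i : ℝ) : ℂ) = _
    rw [hgdef]
    by_cases h : 0 ≤ lam i
    · simp [h, abs_of_nonneg h]
    · push_neg at h
      simp [not_le.mpr h, abs_of_neg h]
  -- T as the real part of a trace
  set z : ℂ := (W₀ * (Cm * Dpᴴ)).trace with hzdef
  have hconj : (W₀ * (Dp * Cmᴴ)).trace = starRingEnd ℂ z := by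
    have h1 : starRingEnd ℂ z = ((W₀ * (Cm * Dpᴴ))ᴴ).trace := by
      rw [Matrix.trace_conjTranspose]
      rfl
    have h2 : (W₀ * (Cm * Dpᴴ))ᴴ = (Dp * Cmᴴ) * W₀ := by
      rw [Matrix.conjTranspose_mul, Matrix.conjTranspose_mul,
        Matrix.conjTranspose_conjTranspose, hW₀H]
    rw [h1, h2, Matrix.trace_mul_comm]
  have hTz : T = z.re := by
    have h2 : z + starRingEnd ℂ z = 2 * (T : ℂ) := by
      rw [← hconj, hzdef, ← Matrix.trace_add, ← Matrix.mul_add, hCD, Matrix.mul_add,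
        Matrix.trace_add, hK1]
      ring
    have := Complex.add_conj z
    rw [this] at h2
    have : (2 * z.re : ℝ) = 2 * T := by exact_mod_cast h2
    linarith
  -- Cauchy-Schwarz bound
  have hzre : z.re ≤ Real.sqrt (frobSq Dp) * Real.sqrt (frobSq (W₀ * Cm)) := by
    have h1 : z = (Dpᴴ * (W₀ * Cm)).trace := by
      rw [hzdef, ← Matrix.mul_assoc, Matrix.trace_mul_comm]
    calc z.re ≤ ‖z‖ := Complex.re_le_norm z
    _ = ‖(Dpᴴ * (W₀ * Cm)).trace‖ := by rw [h1]
    _ ≤ _ := norm_trace_conjTranspose_mul_le Dp (W₀ * Cm)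
  have hWC : frobSq (W₀ * Cm) ≤ frobSq Cm := by
    rw [hW₀def]
    rw [show U * Matrix.diagonal (fun i => (g i : ℂ)) * Uᴴ * Cm
        = U * (Matrix.diagonal (fun i => (g i : ℂ)) * (Uᴴ * Cm)) by noncomm_ring]
    rw [frobSq_unitary_mul hUU]
    calc frobSq (Matrix.diagonal (fun i => (g i : ℂ)) * (Uᴴ * Cm))
        ≤ frobSq (Uᴴ * Cm) := by
          apply frobSq_diagonal_mul
          intro i
          rw [hgdef]
          by_cases h : 0 ≤ lam i <;> simp [h]
    _ = frobSq Cm := frobSq_unitary_mul (by rw [Matrix.conjTranspose_conjTranspose]; exact hUU') Cm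
  -- traces of the cross terms
  have hAB : (Aᴴ * B).trace = ((c * t : ℝ) : ℂ) := by
    rw [hAH, hBdef, Matrix.mul_smul, Matrix.trace_smul, ← Matrix.mul_assoc, hWt,
      smul_eq_mul]
    push_cast
    rw [htdef]
  have hBA : (Bᴴ * A).trace = ((c * t : ℝ) : ℂ) := by
    have : Bᴴ * A = (Aᴴ * B)ᴴ := by
      rw [Matrix.conjTranspose_mul, Matrix.conjTranspose_conjTranspose]
    rw [this, Matrix.trace_conjTranspose, hAB]
    simp [Complex.star_def, Complex.conj_ofReal]
  have hAA' : (Aᴴ * A).trace = 1 := by rw [hAH, hAA, hρ.2]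
  have hBB : (Bᴴ * B).trace = ((γ : ℝ) : ℂ) := by
    rw [hBdef, Matrix.conjTranspose_smul, Matrix.conjTranspose_mul, hSH]
    rw [Matrix.smul_mul, Matrix.mul_smul, smul_smul]
    rw [Matrix.trace_smul]
    rw [show (Wᴴ * S) * (S * W) = Wᴴ * ((S * S) * W) by noncomm_ring, hSS]
    rw [Matrix.trace_mul_comm, Matrix.mul_assoc]
    rw [hWU, Matrix.mul_one, hσ.2, smul_eq_mul, mul_one, Complex.star_def,
      Complex.conj_ofReal]
    exact_mod_cast congrArg Complex.ofReal hc2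
  have hfrobC : frobSq Cm = 1 + γ - 2 * (c * t) := by
    have hexp : Cmᴴ * Cm = Aᴴ * A - Aᴴ * B - Bᴴ * A + Bᴴ * B := by
      rw [hCmdef, Matrix.conjTranspose_sub]
      noncomm_ring
    have := re_trace_conjTranspose_mul Cm
    rw [hexp] at this
    rw [← this]
    rw [Matrix.trace_add, Matrix.trace_sub, Matrix.trace_sub, hAA', hAB, hBA, hBB]
    push_cast
    simp
    ring
  have hfrobD : frobSq Dp = 1 + γ + 2 * (c * t) := by
    have hexp : Dpᴴ * Dp = Aᴴ * A + Aᴴ * B + Bᴴ * A + Bᴴ * B := by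
      rw [hDpdef, Matrix.conjTranspose_add]
      noncomm_ring
    have := re_trace_conjTranspose_mul Dp
    rw [hexp] at this
    rw [← this]
    rw [Matrix.trace_add, Matrix.trace_add, Matrix.trace_add, hAA', hAB, hBA, hBB]
    push_cast
    simp
    ring
  -- sum of eigenvalues
  have hsum : ∑ i, lam i = 1 - γ := by
    have h1 : M.trace = ((1 - γ : ℝ) : ℂ) := by
      rw [hMdef, Matrix.trace_sub, Matrix.trace_smul, hρ.2, hσ.2, smul_eq_mul, mul_one]
      push_cast
      ring
    have h2 := trace_eq_sum_eigenvalues hM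
    rw [h1] at h2
    have : ((1 - γ : ℝ) : ℂ) = ((∑ i, lam i : ℝ) : ℂ) := by
      rw [h2]; push_cast; rfl
    exact_mod_cast this.symm
  -- hockey stick value
  have hhs : hsDiv γ ρ σ = (T + (1 - γ)) / 2 := by
    unfold hsDiv posPartTrace
    rw [dif_pos hM]
    rw [← hsum, hTdef]
    rw [← Finset.sum_add_distrib, Finset.sum_div]
    apply Finset.sum_congr rfl
    intro i _
    rcases le_or_gt 0 (lam i) with h | h
    · rw [max_eq_left h, abs_of_nonneg h]; ring
    · rw [max_eq_right h.le, abs_of_neg h]; ring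
  -- final bound
  have hT : T ≤ Real.sqrt ((1 + γ) ^ 2 - 4 * γ * t ^ 2) := by
    have h1 : T ≤ Real.sqrt (frobSq Dp) * Real.sqrt (frobSq Cm) := by
      rw [hTz]
      calc z.re ≤ Real.sqrt (frobSq Dp) * Real.sqrt (frobSq (W₀ * Cm)) := hzre
      _ ≤ Real.sqrt (frobSq Dp) * Real.sqrt (frobSq Cm) := by
          apply mul_le_mul_of_nonneg_left (Real.sqrt_le_sqrt hWC) (Real.sqrt_nonneg _)
    have h2 : Real.sqrt (frobSq Dp) * Real.sqrt (frobSq Cm)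
        = Real.sqrt (frobSq Dp * frobSq Cm) := (Real.sqrt_mul (frobSq_nonneg Dp) _).symm
    have h3 : frobSq Dp * frobSq Cm = (1 + γ) ^ 2 - 4 * γ * t ^ 2 := by
      rw [hfrobC, hfrobD]
      have : c * c = γ := hc2
      nlinarith [this]
    rw [h2, h3] at h1
    exact h1
  rw [hhs]
  have := Real.sqrt_nonneg ((1 + γ) ^ 2 - 4 * γ * t ^ 2)
  linarith
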